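/- Let κ ∈ {+,−} and 0 < ε₁ < S, and suppose C_{λ₀,ε₁}^κ ∩ ∂𝔛_{λ₀}(ε₁) ∩ closure(𝔠_y^{−κ}) ≠ ∅. Then for every 0 < ε < ε₁ the set Y_ε := (C_{λ₀,ε}^κ ∩ 𝔛_{λ₀}(ε₁) ∩ 𝔠_y^{−κ}) ∪ (∂𝔛_{λ₀}(ε₁) ∩ closure(𝔠_y^{−κ})) is connected. -/

import Mathlib

open Set Topology

/-- A map `G` is compact on `B` if it is continuous on `B` and maps bounded closed
subsets of the ambient space contained in `B` to relatively compact sets. -/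
def IsCompactMapOn {E F : Type*} [NormedAddCommGroup E] [NormedSpace ℝ E]
    [NormedAddCommGroup F] [NormedSpace ℝ F] (G : E → F) (B : Set E) : Prop :=
  ContinuousOn G B ∧
    ∀ A : Set E, A ⊆ B → Bornology.IsBounded A → IsClosed A → IsCompact (closure (G '' A))

variable {X : Type*} [NormedAddCommGroup X] [NormedSpace ℝ X]

/-- The nonlinear map `F(x, λ) = x - λ K x - H (x, λ)`. -/
noncomputable def Fmap (K : X →L[ℝ] X) (H : X × ℝ → X) : X × ℝ → X :=
  fun p => p.1 - p.2 • K p.1 - H p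

open Classical in
/-- The map `h(x, λ) = ‖x‖⁻¹ H(x,λ)` for `x ≠ 0`, `0` otherwise. -/
noncomputable def hmap (H : X × ℝ → X) : X × ℝ → X :=
  fun p => if p.1 = 0 then 0 else ‖p.1‖⁻¹ • H p

/-- `μ` is a characteristic value of `K` if `μ⁻¹` is an eigenvalue of `K`. -/
def CharVal (K : X →L[ℝ] X) (μ : ℝ) : Prop :=
  Module.End.HasEigenvalue (K : X →ₗ[ℝ] X) μ⁻¹

/-- The multiplicity of a characteristic value `μ`: the dimension of the generalized
eigenspace `⋃_k ker((μ⁻¹ • I - K)^k)` of `K` for the eigenvalue `μ⁻¹`. -/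
noncomputable def charMult (K : X →L[ℝ] X) (μ : ℝ) : ℕ :=
  Module.finrank ℝ (Module.End.maxGenEigenspace (K : X →ₗ[ℝ] X) μ⁻¹)

/-- `𝔖(F)`: the closure in `Ω` of the set of non-trivial solutions of `F(x,λ) = 0`. -/
def SolClosure (F : X × ℝ → X) (Ω : Set (X × ℝ)) : Set (X × ℝ) :=
  closure {p | p ∈ Ω ∧ F p = 0 ∧ p.1 ≠ 0} ∩ Ω

/-- `C_{λ₀}(F)`: the connected component of `(0, λ₀)` in `𝔖(F) ∪ {(0, λ₀)}`. -/
noncomputable def Ccomp (F : X × ℝ → X) (Ω : Set (X × ℝ)) (lam0 : ℝ) : Set (X × ℝ) :=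
  connectedComponentIn (SolClosure F Ω ∪ {((0 : X), lam0)}) ((0 : X), lam0)

/-- `𝔛_{λ₀}(r) = {(x, μ) : ‖x‖ + |λ₀ - μ| < r}`. -/
def ball0 (X : Type*) [NormedAddCommGroup X] (lam0 r : ℝ) : Set (X × ℝ) :=
  {p | ‖p.1‖ + |lam0 - p.2| < r}

/-- The cone `𝔠_y⁺` (for `σ = 1`) resp. `𝔠_y⁻` (for `σ = -1`):
`{(x, λ) : σ l(x) > y ‖x‖}`. -/
def cone (l : X →L[ℝ] ℝ) (σ y : ℝ) : Set (X × ℝ) :=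
  {p | y * ‖p.1‖ < σ * l p.1}

/-- The cone `𝔠_y = {(x, λ) : |l(x)| > y ‖x‖}`. -/
def coneAbs (l : X →L[ℝ] ℝ) (y : ℝ) : Set (X × ℝ) :=
  {p | y * ‖p.1‖ < |l p.1|}

/-- A branch of solutions of `F(x,λ) = 0` at `(0, λ₀)` in the direction of `σ v`
(where `σ = ±1`): a connected subset `Q` of `C_{λ₀}(F)` containing `(0, λ₀)` such that
for every `y ∈ (0,1)` there is `ε_y > 0` with
`∅ ≠ Q ∩ ∂𝔛_{λ₀}(ε) ⊆ 𝔠_y^σ` for all `0 < ε < ε_y`. -/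
def IsBranch (F : X × ℝ → X) (Ω : Set (X × ℝ)) (lam0 : ℝ) (l : X →L[ℝ] ℝ) (σ : ℝ)
    (Q : Set (X × ℝ)) : Prop :=
  Q ⊆ Ccomp F Ω lam0 ∧ IsPreconnected Q ∧ ((0 : X), lam0) ∈ Q ∧
    ∀ y ∈ Ioo (0 : ℝ) 1, ∃ εy > 0, ∀ ε, 0 < ε → ε < εy →
      (Q ∩ frontier (ball0 X lam0 ε)).Nonempty ∧
        Q ∩ frontier (ball0 X lam0 ε) ⊆ cone l σ y

/-- `C_{λ₀}^κ(F)` for `κ = σ = ±1`: the closure in `Ω` of the union of `{(0, λ₀)}` and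
all branches of solutions in the direction of `σ v`. -/
noncomputable def Cdir (F : X × ℝ → X) (Ω : Set (X × ℝ)) (lam0 : ℝ) (l : X →L[ℝ] ℝ)
    (σ : ℝ) : Set (X × ℝ) :=
  closure ({((0 : X), lam0)} ∪ ⋃₀ {Q | IsBranch F Ω lam0 l σ Q}) ∩ Ω

/-- `C_{λ₀,ε}^κ` for `κ = σ = ±1`: the connected component of `(0, λ₀)` in
`C_{λ₀}(F) \ (𝔛_{λ₀}(ε) ∩ 𝔠_y^{-κ})`. -/
noncomputable def Cloc (F : X × ℝ → X) (Ω : Set (X × ℝ)) (lam0 : ℝ) (l : X →L[ℝ] ℝ)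
    (y σ ε : ℝ) : Set (X × ℝ) :=
  connectedComponentIn (Ccomp F Ω lam0 \ (ball0 X lam0 ε ∩ cone l (-σ) y)) ((0 : X), lam0)



section AuxLemmas
set_option maxHeartbeats 1000000
variable {X : Type*} [NormedAddCommGroup X] [NormedSpace ℝ X]


lemma continuous_fnorm (lam0 : ℝ) : Continuous (fun p : X × ℝ => ‖p.1‖ + |lam0 - p.2|) := by
  fun_prop

lemma isOpen_ball0 (lam0 r : ℝ) : IsOpen (ball0 X lam0 r) :=
  isOpen_lt (continuous_fnorm lam0) continuous_const

lemma closure_ball0 (lam0 : ℝ) {r : ℝ} (hr : 0 < r) :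
    closure (ball0 X lam0 r) = {p | ‖p.1‖ + |lam0 - p.2| ≤ r} := by
  apply Subset.antisymm
  · refine closure_minimal (fun p hp => ?_) (isClosed_le (continuous_fnorm lam0) continuous_const)
    exact le_of_lt (show ‖p.1‖ + |lam0 - p.2| < r from hp)
  · rintro ⟨x, μ⟩ hq
    simp only [mem_setOf_eq] at hq
    set g : ℝ → X × ℝ := fun t => (t • x, lam0 + t • (μ - lam0)) with hg
    have hgc : Continuous g := by fun_prop
    have hg1 : g 1 = (x, μ) := by simp [hg]
    have htend : Filter.Tendsto g (nhdsWithin 1 (Iio 1)) (nhds (x, μ)) := by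
      rw [← hg1]; exact (hgc.tendsto 1).mono_left nhdsWithin_le_nhds
    refine mem_closure_of_tendsto htend ?_
    filter_upwards [Ioo_mem_nhdsLT_of_mem (show (1:ℝ) ∈ Ioc 0 1 by norm_num)] with t ht
    have ht0 : 0 < t := ht.1
    have ht1 : t < 1 := ht.2
    show ‖t • x‖ + |lam0 - (lam0 + t • (μ - lam0))| < r
    have : ‖t • x‖ + |lam0 - (lam0 + t • (μ - lam0))| = t * (‖x‖ + |lam0 - μ|) := by
      rw [norm_smul]
      have : lam0 - (lam0 + t • (μ - lam0)) = t * (lam0 - μ) := by ring_nf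
      rw [this, abs_mul, Real.norm_eq_abs, abs_of_pos ht0]
      ring
    rw [this]
    calc t * (‖x‖ + |lam0 - μ|) ≤ t * r := by
          apply mul_le_mul_of_nonneg_left hq ht0.le
      _ < r := by nlinarith
lemma frontier_ball0 (lam0 : ℝ) {r : ℝ} (hr : 0 < r) :
    frontier (ball0 X lam0 r) = {p | ‖p.1‖ + |lam0 - p.2| = r} := by
  rw [frontier, closure_ball0 lam0 hr, (isOpen_ball0 lam0 r).interior_eq]
  ext p
  simp only [mem_diff, mem_setOf_eq, ball0]
  constructor
  · rintro ⟨h1, h2⟩; exact le_antisymm h1 (not_lt.mp h2)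
  · rintro h; exact ⟨le_of_eq h, by simp [h]⟩

lemma isOpen_cone (l : X →L[ℝ] ℝ) (σ y : ℝ) : IsOpen (cone l σ y) := by
  apply isOpen_lt
  · fun_prop
  · exact (continuous_const.mul (l.continuous.comp continuous_fst))

lemma closure_cone (l : X →L[ℝ] ℝ) {σ y : ℝ} (hσ : σ = 1 ∨ σ = -1) {v : X}
    (hv : ‖v‖ = 1) (hlv : l v = 1) (hy0 : 0 ≤ y) (hy1 : y < 1) :
    closure (cone l (-σ) y) = {p : X × ℝ | y * ‖p.1‖ ≤ -σ * l p.1} := by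
  have hσ2 : σ * σ = 1 := by rcases hσ with h | h <;> rw [h] <;> norm_num
  have hσabs : |σ| = 1 := by rcases hσ with h | h <;> rw [h] <;> norm_num
  apply Subset.antisymm
  · refine closure_minimal (fun p hp => le_of_lt (show y * ‖p.1‖ < -σ * l p.1 from hp)) ?_
    exact isClosed_le (by fun_prop) ((continuous_const.mul (l.continuous.comp continuous_fst)))
  · rintro ⟨x, μ⟩ hq
    simp only [mem_setOf_eq] at hq
    set w : X := (-σ) • v with hw
    have hlw : l w = -σ := by simp [hw, hlv]
    have hnw : ‖w‖ = 1 := by rw [hw, norm_smul, hv]; simp [hσabs]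
    set g : ℝ → X × ℝ := fun s => (x + s • w, μ) with hg
    have hgc : Continuous g := by fun_prop
    have hg0 : g 0 = (x, μ) := by simp [hg]
    have htend : Filter.Tendsto g (nhdsWithin 0 (Ioi 0)) (nhds (x, μ)) := by
      rw [← hg0]; exact (hgc.tendsto 0).mono_left nhdsWithin_le_nhds
    refine mem_closure_of_tendsto htend ?_
    filter_upwards [self_mem_nhdsWithin] with s hs
    have hs0 : (0:ℝ) < s := hs
    show y * ‖x + s • w‖ < (-σ) * l (x + s • w)
    have hr : (-σ) * l (x + s • w) = -σ * l x + s := by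
      rw [map_add, map_smul]
      simp only [smul_eq_mul, hlw]
      nlinarith [hσ2]
    have hlhs : y * ‖x + s • w‖ ≤ y * ‖x‖ + y * s := by
      have h1 : ‖x + s • w‖ ≤ ‖x‖ + s := by
        calc ‖x + s • w‖ ≤ ‖x‖ + ‖s • w‖ := norm_add_le _ _
          _ = ‖x‖ + s := by rw [norm_smul, hnw, Real.norm_eq_abs, abs_of_pos hs0]; ring
      nlinarith
    rw [hr]
    nlinarith



lemma isPreconnected_sphere_cone (l : X →L[ℝ] ℝ) {σ y : ℝ} (hσ : σ = 1 ∨ σ = -1) {v : X}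
    (hv : ‖v‖ = 1) (hlv : l v = 1) (hy0 : 0 ≤ y) (hy1 : y ≤ 1) (lam0 : ℝ) {r : ℝ} (hr : 0 < r) :
    IsPreconnected ({p : X × ℝ | ‖p.1‖ + |lam0 - p.2| = r} ∩ {p | y * ‖p.1‖ ≤ -σ * l p.1}) := by
  have hσ2 : σ * σ = 1 := by rcases hσ with h | h <;> rw [h] <;> norm_num
  have hσabs : |σ| = 1 := by rcases hσ with h | h <;> rw [h] <;> norm_num
  set A' : Set (X × ℝ) :=
    {p : X × ℝ | ‖p.1‖ + |lam0 - p.2| = r} ∩ {p | y * ‖p.1‖ ≤ -σ * l p.1} with hA'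
  set w : X := (-σ) • v with hw
  have hlw : l w = -σ := by simp [hw, hlv]
  have hnw : ‖w‖ = 1 := by rw [hw, norm_smul, hv]; simp [hσabs]
  set η : ℝ → X × ℝ := fun t => ((r * (1 - |2*t-1|)) • w, lam0 + (2*t-1) * r) with hη
  have hηcont : Continuous η := by fun_prop
  have hηsub : η '' Icc 0 1 ⊆ A' := by
    rintro _ ⟨t, ht, rfl⟩
    have habs : |2*t-1| ≤ 1 := by rw [abs_le]; constructor <;> nlinarith [ht.1, ht.2]
    have hm0 : 0 ≤ r * (1 - |2*t-1|) := by nlinarith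
    constructor
    · show ‖(r * (1 - |2*t-1|)) • w‖ + |lam0 - (lam0 + (2*t-1) * r)| = r
      rw [norm_smul, hnw, Real.norm_eq_abs, abs_of_nonneg hm0]
      have : lam0 - (lam0 + (2*t-1) * r) = -((2*t-1) * r) := by ring
      rw [this, abs_neg, abs_mul, abs_of_pos hr]
      ring
    · show y * ‖(r * (1 - |2*t-1|)) • w‖ ≤ -σ * l ((r * (1 - |2*t-1|)) • w)
      rw [norm_smul, hnw, Real.norm_eq_abs, abs_of_nonneg hm0, map_smul]
      simp only [smul_eq_mul, hlw]
      nlinarith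
  have hη1 : η 1 = ((0:X), lam0 + r) := by
    show ((r * (1 - |2*(1:ℝ)-1|)) • w, lam0 + (2*(1:ℝ)-1) * r) = ((0:X), lam0 + r)
    simp only [Prod.mk.injEq]
    constructor
    · rw [show (2:ℝ)*1-1 = 1 by norm_num]; norm_num
    · ring
  have hη0 : η 0 = ((0:X), lam0 - r) := by
    show ((r * (1 - |2*(0:ℝ)-1|)) • w, lam0 + (2*(0:ℝ)-1) * r) = ((0:X), lam0 - r)
    simp only [Prod.mk.injEq]
    constructor
    · rw [show (2:ℝ)*0-1 = -1 by norm_num]; norm_num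
    · ring
  have hpole : ((0:X), lam0 + r) ∈ η '' Icc 0 1 := ⟨1, by norm_num, hη1⟩
  -- for each a ∈ A', the path γ towards the pole
  have key : ∀ a ∈ A', ∃ Z : Set (X × ℝ), IsPreconnected Z ∧ a ∈ Z ∧
      ((0:X), lam0 + r) ∈ Z ∧ Z ⊆ A' := by
    rintro ⟨x, μ⟩ ha
    obtain ⟨ha1, ha2⟩ := ha
    simp only [mem_setOf_eq] at ha1 ha2
    set s : ℝ := if lam0 ≤ μ then 1 else -1 with hs
    have hsabs : |s| = 1 := by rw [hs]; split <;> norm_num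
    have hxr : ‖x‖ ≤ r := by nlinarith [abs_nonneg (lam0 - μ), ha1]
    set γ : ℝ → X × ℝ := fun t => ((1-t) • x, lam0 + s * (r - (1-t) * ‖x‖)) with hγ
    have hγcont : Continuous γ := by fun_prop
    have hγsub : γ '' Icc 0 1 ⊆ A' := by
      rintro _ ⟨t, ht, rfl⟩
      have ht1 : 0 ≤ 1 - t := by linarith [ht.2]
      have ht1' : 1 - t ≤ 1 := by linarith [ht.1]
      have hrest : 0 ≤ r - (1-t) * ‖x‖ := by nlinarith [norm_nonneg x]
      constructor
      · show ‖(1-t) • x‖ + |lam0 - (lam0 + s * (r - (1-t) * ‖x‖))| = r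
        rw [norm_smul, Real.norm_eq_abs, abs_of_nonneg ht1]
        have : lam0 - (lam0 + s * (r - (1-t) * ‖x‖)) = -(s * (r - (1-t) * ‖x‖)) := by ring
        rw [this, abs_neg, abs_mul, hsabs, abs_of_nonneg hrest]
        ring
      · show y * ‖(1-t) • x‖ ≤ -σ * l ((1-t) • x)
        rw [norm_smul, Real.norm_eq_abs, abs_of_nonneg ht1, map_smul]
        simp only [smul_eq_mul]
        nlinarith
    have hγ0 : γ 0 = (x, μ) := by
      show ((1-(0:ℝ)) • x, lam0 + s * (r - (1-(0:ℝ)) * ‖x‖)) = (x, μ)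
      simp only [Prod.mk.injEq]
      constructor
      · norm_num
      · rw [hs]
        split <;> rename_i h
        · rw [abs_of_nonpos (by linarith : lam0 - μ ≤ 0)] at ha1; nlinarith [ha1]
        · rw [abs_of_nonneg (by linarith : 0 ≤ lam0 - μ)] at ha1; nlinarith [ha1]
    have hγ1 : γ 1 = ((0:X), lam0 + s * r) := by
      show ((1-(1:ℝ)) • x, lam0 + s * (r - (1-(1:ℝ)) * ‖x‖)) = ((0:X), lam0 + s * r)
      simp only [Prod.mk.injEq]
      constructor
      · norm_num
      · ring
    have hγ1mem : γ 1 ∈ η '' Icc 0 1 := by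
      by_cases h : lam0 ≤ μ
      · refine ⟨1, by norm_num, ?_⟩
        rw [hη1, hγ1, hs, if_pos h]
        simp only [Prod.mk.injEq]
        exact ⟨trivial, by ring⟩
      · refine ⟨0, by norm_num, ?_⟩
        rw [hη0, hγ1, hs, if_neg h]
        simp only [Prod.mk.injEq]
        exact ⟨trivial, by ring⟩
    refine ⟨γ '' Icc 0 1 ∪ η '' Icc 0 1, ?_, ?_, ?_, ?_⟩
    · exact IsPreconnected.union (γ 1)
        (mem_image_of_mem γ (by norm_num : (1:ℝ) ∈ Icc (0:ℝ) 1)) hγ1mem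
        (isPreconnected_Icc.image _ hγcont.continuousOn)
        (isPreconnected_Icc.image _ hηcont.continuousOn)
    · exact Or.inl ⟨0, by norm_num, hγ0⟩
    · exact Or.inr hpole
    · exact union_subset hγsub hηsub
  -- conclude via sUnion
  choose Z hZpre hZmem hZpole hZsub using key
  have : A' = ⋃₀ {T | ∃ a, ∃ h : a ∈ A', T = Z a h} := by
    apply Subset.antisymm
    · intro a ha; exact ⟨Z a ha, ⟨a, ha, rfl⟩, hZmem a ha⟩
    · rintro p ⟨T, ⟨a, ha, rfl⟩, hp⟩; exact hZsub a ha hp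
  rw [this]
  exact isPreconnected_sUnion ((0:X), lam0 + r) _ (by rintro T ⟨a, ha, rfl⟩; exact hZpole a ha)
    (by rintro T ⟨a, ha, rfl⟩; exact hZpre a ha)



lemma connectedComponentIn_eq_inter_closure {α : Type*} [TopologicalSpace α] {F : Set α} {x : α}
    (hx : x ∈ F) : connectedComponentIn F x = F ∩ closure (connectedComponentIn F x) := by
  apply Subset.antisymm (subset_inter (connectedComponentIn_subset F x) subset_closure)
  rintro z ⟨hzF, hzc⟩
  have hpre : IsPreconnected (connectedComponentIn F x ∪ {z}) :=
    isPreconnected_connectedComponentIn.subset_closure subset_union_left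
      (union_subset subset_closure (by simpa using hzc))
  have hsub : connectedComponentIn F x ∪ {z} ⊆ connectedComponentIn F x :=
    hpre.subset_connectedComponentIn (mem_union_left _ (mem_connectedComponentIn hx))
      (union_subset (connectedComponentIn_subset F x) (by simpa using hzF))
  exact hsub (mem_union_right _ rfl)

lemma clopen_separation {α : Type*} [TopologicalSpace α] [T2Space α] {A F : Set α}
    (hA : IsCompact A) (hF : IsClosed F) {p : α} (hp : p ∈ A)
    (hdis : connectedComponentIn A p ∩ F = ∅) :
    ∃ V O : Set α, connectedComponentIn A p ⊆ V ∧ V ⊆ A ∧ V ∩ F = ∅ ∧ IsClosed V ∧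
      IsOpen O ∧ V = A ∩ O := by
  have hcs : CompactSpace A := isCompact_iff_compactSpace.mp hA
  set x : A := ⟨p, hp⟩ with hxdef
  have hcc : connectedComponentIn A p = Subtype.val '' connectedComponent x :=
    connectedComponentIn_eq_image hp
  set L : Set A := Subtype.val ⁻¹' F with hL
  have hLclosed : IsClosed L := hF.preimage continuous_subtype_val
  have hLcompact : IsCompact L := hLclosed.isCompact
  have hinter : L ∩ ⋂ Z : {Z : Set A // IsClopen Z ∧ x ∈ Z}, (Z : Set A) = ∅ := by
    rw [← connectedComponent_eq_iInter_isClopen x]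
    ext z
    simp only [mem_inter_iff, mem_empty_iff_false, iff_false, not_and]
    intro hz1 hz2
    have hmem : (z : α) ∈ connectedComponentIn A p ∩ F := ⟨hcc ▸ ⟨z, hz2, rfl⟩, hz1⟩
    rw [hdis] at hmem
    exact hmem
  obtain ⟨u, hu⟩ := hLcompact.elim_finite_subfamily_closed _ (fun Z => Z.2.1.1) hinter
  set W : Set A := ⋂ Z ∈ u, (Z : Set A) with hW
  have hWclopen : IsClopen W := by
    refine Set.Finite.isClopen_biInter u.finite_toSet (fun Z _ => Z.2.1)
  have hccW : connectedComponent x ⊆ W :=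
    subset_iInter₂ fun Z _ => Z.2.1.connectedComponent_subset Z.2.2
  have hWL : W ∩ L = ∅ := by
    ext z
    simp only [mem_inter_iff, mem_empty_iff_false, iff_false, not_and]
    intro hz1 hz2
    have : z ∈ L ∩ ⋂ Z ∈ u, (Z : Set A) := ⟨hz2, hz1⟩
    rw [hu] at this
    exact this
  obtain ⟨O, hO, hOW⟩ := isOpen_induced_iff.mp hWclopen.isOpen
  refine ⟨Subtype.val '' W, O, ?_, ?_, ?_, ?_, hO, ?_⟩
  · rw [hcc]; exact image_mono hccW
  · rintro _ ⟨z, _, rfl⟩; exact z.2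
  · ext q
    simp only [mem_inter_iff, mem_empty_iff_false, iff_false, not_and]
    rintro ⟨z, hz, rfl⟩ hq
    have : z ∈ W ∩ L := ⟨hz, hq⟩
    rw [hWL] at this
    exact this
  · exact ((hWclopen.isClosed.isCompact).image continuous_subtype_val).isClosed
  · rw [← hOW]
    ext q
    constructor
    · rintro ⟨z, hz, rfl⟩; exact ⟨z.2, hz⟩
    · rintro ⟨hqA, hqO⟩; exact ⟨⟨q, hqA⟩, hqO, rfl⟩

lemma isCompact_sol (K : X →L[ℝ] X) (hK : IsCompactOperator ⇑K) {H : X × ℝ → X} {Ω : Set (X × ℝ)}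
    (hH : IsCompactMapOn H Ω) (lam0 : ℝ) (ε₁ : ℝ)
    (hsub : {p : X × ℝ | ‖p.1‖ + |lam0 - p.2| ≤ ε₁} ⊆ Ω) :
    IsCompact (closure {p : X × ℝ | p ∈ Ω ∧ Fmap K H p = 0 ∧ p.1 ≠ 0} ∩
      {p : X × ℝ | ‖p.1‖ + |lam0 - p.2| ≤ ε₁}) := by
  set NT := {p : X × ℝ | p ∈ Ω ∧ Fmap K H p = 0 ∧ p.1 ≠ 0} with hNT
  set Γ := closure NT ∩ {p : X × ℝ | ‖p.1‖ + |lam0 - p.2| ≤ ε₁} with hΓ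
  have hclosedBc : IsClosed {p : X × ℝ | ‖p.1‖ + |lam0 - p.2| ≤ ε₁} :=
    isClosed_le (continuous_fnorm lam0) continuous_const
  have hΓclosed : IsClosed Γ := isClosed_closure.inter hclosedBc
  have hΓΩ : Γ ⊆ Ω := fun p hp => hsub hp.2
  have hΓn : ∀ p ∈ Γ, ‖p.1‖ ≤ ε₁ ∧ |lam0 - p.2| ≤ ε₁ := by
    intro p hp
    have h2 : ‖p.1‖ + |lam0 - p.2| ≤ ε₁ := hp.2
    constructor
    · nlinarith [abs_nonneg (lam0 - p.2)]
    · nlinarith [norm_nonneg p.1]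
  have hΓsub2 : Γ ⊆ (Metric.closedBall (0:X) ε₁) ×ˢ (Icc (lam0-ε₁) (lam0+ε₁)) := by
    intro p hp
    obtain ⟨h1, h2⟩ := hΓn p hp
    rw [abs_le] at h2
    exact ⟨mem_closedBall_zero_iff.mpr h1, ⟨by linarith [h2.2], by linarith [h2.1]⟩⟩
  have hΓbdd : Bornology.IsBounded Γ :=
    (Metric.isBounded_closedBall.prod (Metric.isBounded_Icc (lam0-ε₁) (lam0+ε₁))).subset hΓsub2
  have hFcont : ContinuousOn (Fmap K H) Ω := by
    have h1 : Continuous (fun p : X × ℝ => p.1 - p.2 • K p.1) := by fun_prop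
    exact (h1.continuousOn).sub hH.1
  have hΓF : ∀ p ∈ Γ, Fmap K H p = 0 := by
    intro p hp
    have hNe : (nhdsWithin p NT).NeBot := mem_closure_iff_nhdsWithin_neBot.mp hp.1
    have h1 : Filter.Tendsto (Fmap K H) (nhdsWithin p NT) (nhds (Fmap K H p)) :=
      ((hFcont p (hΓΩ hp)).mono (fun q hq => hq.1))
    have h2 : Filter.Tendsto (Fmap K H) (nhdsWithin p NT) (nhds 0) := by
      apply Filter.Tendsto.congr' ?_ tendsto_const_nhds
      filter_upwards [self_mem_nhdsWithin] with q hq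
      exact hq.2.1.symm
    exact tendsto_nhds_unique h1 h2
  have hK' : IsCompactOperator ⇑(K.toLinearMap) := hK
  obtain ⟨KB, hKBcpt, hKBsub⟩ := hK'.image_closedBall_subset_compact ε₁
  have hI : IsCompact (Icc (lam0-ε₁) (lam0+ε₁)) := isCompact_Icc
  set M1 := (fun z : ℝ × X => z.1 • z.2) '' ((Icc (lam0-ε₁) (lam0+ε₁)) ×ˢ KB) with hM1
  have hM1cpt : IsCompact M1 := (hI.prod hKBcpt).image (continuous_fst.smul continuous_snd)
  have hHBcpt : IsCompact (closure (H '' Γ)) := hH.2 Γ hΓΩ hΓbdd hΓclosed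
  set SumS := (fun z : X × X => z.1 + z.2) '' (M1 ×ˢ closure (H '' Γ)) with hSumS
  have hSumcpt : IsCompact SumS := (hM1cpt.prod hHBcpt).image (continuous_fst.add continuous_snd)
  have hsup : Γ ⊆ SumS ×ˢ (Icc (lam0-ε₁) (lam0+ε₁)) := by
    intro p hp
    have hF0 : p.1 - p.2 • K p.1 - H p = 0 := hΓF p hp
    have hx : p.1 = p.2 • K p.1 + H p := by
      have := sub_eq_zero.mp hF0
      rw [sub_eq_iff_eq_add] at this
      linear_combination (norm := module) this
    refine ⟨?_, (hΓsub2 hp).2⟩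
    refine ⟨(p.2 • K p.1, H p), ⟨?_, ?_⟩, hx.symm⟩
    · refine ⟨(p.2, K p.1), ⟨(hΓsub2 hp).2, ?_⟩, rfl⟩
      exact hKBsub (mem_image_of_mem _ (mem_closedBall_zero_iff.mpr (hΓn p hp).1))
    · exact subset_closure (mem_image_of_mem H hp)
  exact IsCompact.of_isClosed_subset (hSumcpt.prod hI) hΓclosed hsup

end AuxLemmas

set_option maxHeartbeats 2000000 in
/-- If `C_{λ₀,ε₁}^κ ∩ ∂𝔛_{λ₀}(ε₁) ∩ closure(𝔠_y^{−κ}) ≠ ∅`, then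
for every `0 < ε < ε₁` the set
`Y_ε = (C_{λ₀,ε}^κ ∩ 𝔛_{λ₀}(ε₁) ∩ 𝔠_y^{−κ}) ∪ (∂𝔛_{λ₀}(ε₁) ∩ closure(𝔠_y^{−κ}))` is
connected. -/
theorem connected_Y_eps
    {X : Type*} [NormedAddCommGroup X] [NormedSpace ℝ X] [CompleteSpace X]
    (lam0 : ℝ) (Ω : Set (X × ℝ)) (hΩ : Ω ∈ 𝓝 ((0 : X), lam0))
    (K : X →L[ℝ] X) (hK : IsCompactOperator K)
    (H : X × ℝ → X) (hH : IsCompactMapOn H Ω) (hh : ContinuousOn (hmap H) Ω)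
    (hchar : CharVal K lam0) (hsimple : charMult K lam0 = 1)
    (v : X) (hv : ‖v‖ = 1) (hKv : K v = lam0⁻¹ • v)
    (l : X →L[ℝ] ℝ) (hl : ∀ x : X, l (K x) = lam0⁻¹ * l x) (hlv : l v = 1)
    (y : ℝ) (hy : y ∈ Ioo (0 : ℝ) 1) (S : ℝ) (hS0 : 0 < S)
    (hSΩ : closure (ball0 X lam0 S) ⊆ interior Ω)
    (hScone : (SolClosure (Fmap K H) Ω ∩ closure (ball0 X lam0 S)) \ {((0 : X), lam0)}
      ⊆ coneAbs l y)
    (σ : ℝ) (hσ : σ = 1 ∨ σ = -1) (ε₁ : ℝ) (hε₁0 : 0 < ε₁) (hε₁S : ε₁ < S)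
    (hne : (Cloc (Fmap K H) Ω lam0 l y σ ε₁ ∩ frontier (ball0 X lam0 ε₁) ∩
      closure (cone l (-σ) y)).Nonempty) :
    ∀ ε : ℝ, 0 < ε → ε < ε₁ →
      IsConnected
        ((Cloc (Fmap K H) Ω lam0 l y σ ε ∩ ball0 X lam0 ε₁ ∩ cone l (-σ) y) ∪
          (frontier (ball0 X lam0 ε₁) ∩ closure (cone l (-σ) y))) := by
  intro ε hε0 hεε₁
  obtain ⟨hy0, hy1⟩ := hy
  have hσ2 : σ * σ = 1 := by rcases hσ with h | h <;> rw [h] <;> norm_num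
  have hσabs : |σ| = 1 := by rcases hσ with h | h <;> rw [h] <;> norm_num
  set Fm := Fmap K H with hFm
  set pt : X × ℝ := ((0:X), lam0) with hpt
  set Bc : Set (X × ℝ) := {p | ‖p.1‖ + |lam0 - p.2| ≤ ε₁} with hBc
  set Sp : Set (X × ℝ) := {p : X × ℝ | ‖p.1‖ + |lam0 - p.2| = ε₁} with hSp
  set Cc : Set (X × ℝ) := {p : X × ℝ | y * ‖p.1‖ ≤ -σ * l p.1} with hCc
  have hfr : frontier (ball0 X lam0 ε₁) = Sp := frontier_ball0 lam0 hε₁0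
  have hclC : closure (cone l (-σ) y) = Cc := closure_cone l hσ hv hlv hy0.le hy1
  have hSpclosed : IsClosed Sp := isClosed_eq (continuous_fnorm lam0) continuous_const
  have hCcclosed : IsClosed Cc := by
    rw [← hclC]; exact isClosed_closure
  have hballBc : ball0 X lam0 ε₁ ⊆ Bc := fun q hq =>
    le_of_lt (show ‖q.1‖ + |lam0 - q.2| < ε₁ from hq)
  have hconeCc : cone l (-σ) y ⊆ Cc := fun q hq =>
    le_of_lt (show y * ‖q.1‖ < -σ * l q.1 from hq)
  have hptnc : pt ∉ cone l (-σ) y := by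
    intro h
    have : y * ‖(0:X)‖ < -σ * l (0:X) := h
    simp at this
  have hcone_ne : ∀ q : X × ℝ, q ∈ cone l (-σ) y → q.1 ≠ 0 := by
    intro q hq h0
    have : y * ‖q.1‖ < -σ * l q.1 := hq
    rw [h0] at this
    simp at this
  have hptM : pt ∈ SolClosure Fm Ω ∪ {pt} := mem_union_right _ rfl
  have hptC : pt ∈ Ccomp Fm Ω lam0 := mem_connectedComponentIn hptM
  have hptloc : pt ∈ Ccomp Fm Ω lam0 \ (ball0 X lam0 ε ∩ cone l (-σ) y) :=
    ⟨hptC, fun hm => hptnc hm.2⟩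
  set C := Cloc Fm Ω lam0 l y σ ε with hC
  have hCpre : IsPreconnected C := isPreconnected_connectedComponentIn
  have hptCl : pt ∈ C := mem_connectedComponentIn hptloc
  have hCsub : C ⊆ Ccomp Fm Ω lam0 \ (ball0 X lam0 ε ∩ cone l (-σ) y) :=
    connectedComponentIn_subset _ _
  have hBcΩ : Bc ⊆ Ω := by
    intro q hq
    have hq2 : q ∈ ball0 X lam0 S := by
      have h' : ‖q.1‖ + |lam0 - q.2| ≤ ε₁ := hq
      show ‖q.1‖ + |lam0 - q.2| < S
      linarith
    exact interior_subset (hSΩ (subset_closure hq2))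
  have hptBc : pt ∈ Bc := by
    show ‖(0:X)‖ + |lam0 - lam0| ≤ ε₁
    simp
    linarith
  -- membership in the open cone for nontrivial points
  have hcone_open_mem : ∀ q, q ∈ Ccomp Fm Ω lam0 → q ≠ pt → q ∈ Bc → q ∈ Cc →
      q ∈ cone l (-σ) y := by
    intro q hq hqne hqBc hqCc
    have hq' := connectedComponentIn_subset _ _ hq
    have hqS : q ∈ SolClosure Fm Ω := by
      rcases hq' with h | h
      · exact h
      · exact absurd h hqne
    have hqball : q ∈ closure (ball0 X lam0 S) := by
      apply subset_closure
      have h' : ‖q.1‖ + |lam0 - q.2| ≤ ε₁ := hqBc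
      show ‖q.1‖ + |lam0 - q.2| < S
      linarith
    have hqabs : q ∈ coneAbs l y := hScone ⟨⟨hqS, hqball⟩, by simpa using hqne⟩
    have h1 : y * ‖q.1‖ < |l q.1| := hqabs
    show y * ‖q.1‖ < -σ * l q.1
    rcases lt_or_eq_of_le (show y * ‖q.1‖ ≤ -σ * l q.1 from hqCc) with h | h
    · exact h
    · exfalso
      have h2 : (0:ℝ) ≤ y * ‖q.1‖ := by positivity
      have h3 : |(-σ) * l q.1| = y * ‖q.1‖ := by rw [← h, abs_of_nonneg h2]
      rw [abs_mul, abs_neg, hσabs, one_mul] at h3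
      linarith
  -- compactness of K₂
  set NT : Set (X × ℝ) := {p | p ∈ Ω ∧ Fm p = 0 ∧ p.1 ≠ 0} with hNT
  have hΓcpt : IsCompact (closure NT ∩ Bc) := isCompact_sol K hK hH lam0 ε₁ hBcΩ
  have hΓptcpt : IsCompact ((closure NT ∩ Bc) ∪ {pt}) := hΓcpt.union isCompact_singleton
  have hCcompeq : Ccomp Fm Ω lam0 =
      (SolClosure Fm Ω ∪ {pt}) ∩ closure (Ccomp Fm Ω lam0) :=
    connectedComponentIn_eq_inter_closure hptM
  have hCeq : C = (Ccomp Fm Ω lam0 \ (ball0 X lam0 ε ∩ cone l (-σ) y)) ∩ closure C :=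
    connectedComponentIn_eq_inter_closure hptloc
  set K₂ : Set (X × ℝ) := C ∩ Bc ∩ Cc with hK₂
  have hK₂C : K₂ ⊆ C := fun r hr => hr.1.1
  have hK₂eq : K₂ = ((closure NT ∩ Bc) ∪ {pt}) ∩
      (closure (Ccomp Fm Ω lam0) ∩ closure C ∩
        (ball0 X lam0 ε ∩ cone l (-σ) y)ᶜ ∩ Cc) := by
    ext q
    constructor
    · rintro ⟨⟨hqC, hqBc⟩, hqCc⟩
      have h1 : q ∈ (Ccomp Fm Ω lam0 \ (ball0 X lam0 ε ∩ cone l (-σ) y)) ∩ closure C :=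
        hCeq ▸ hqC
      have h2 : q ∈ (SolClosure Fm Ω ∪ {pt}) ∩ closure (Ccomp Fm Ω lam0) :=
        hCcompeq ▸ h1.1.1
      refine ⟨?_, ⟨⟨⟨h2.2, h1.2⟩, h1.1.2⟩, hqCc⟩⟩
      rcases h2.1 with h | h
      · exact Or.inl ⟨h.1, hqBc⟩
      · exact Or.inr h
    · rintro ⟨hleft, ⟨⟨⟨hclCc, hclCq⟩, hnb⟩, hqCc⟩⟩
      have hqBc : q ∈ Bc := by
        rcases hleft with h | h
        · exact h.2
        · rw [mem_singleton_iff] at h; rw [h]; exact hptBc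
      have hqM : q ∈ SolClosure Fm Ω ∪ {pt} := by
        rcases hleft with h | h
        · exact Or.inl ⟨h.1, hBcΩ hqBc⟩
        · exact Or.inr h
      have hqCcomp : q ∈ Ccomp Fm Ω lam0 := by rw [hCcompeq]; exact ⟨hqM, hclCc⟩
      have hqC : q ∈ C := by rw [hCeq]; exact ⟨⟨hqCcomp, hnb⟩, hclCq⟩
      exact ⟨⟨hqC, hqBc⟩, hqCc⟩
  have hK₂cpt : IsCompact K₂ := by
    rw [hK₂eq]
    refine hΓptcpt.inter_right ?_
    refine (((isClosed_closure.inter isClosed_closure).inter ?_).inter hCcclosed)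
    exact ((isOpen_ball0 lam0 ε).inter (isOpen_cone l (-σ) y)).isClosed_compl
  -- isolation of pt in K₂
  have hiso : ∀ r ∈ K₂, r ∈ ball0 X lam0 ε → r = pt := by
    intro r hr hrb
    by_contra hne'
    have hrcone : r ∈ cone l (-σ) y :=
      hcone_open_mem r ((hCsub (hK₂C hr)).1) hne' hr.1.2 hr.2
    exact (hCsub (hK₂C hr)).2 ⟨hrb, hrcone⟩
  have hptball : pt ∈ ball0 X lam0 ε := by
    show ‖(0:X)‖ + |lam0 - lam0| < ε
    simp
    linarith
  -- the key step: each point of P₁ is connected within Y to the sphere part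
  have key : ∀ q ∈ C ∩ ball0 X lam0 ε₁ ∩ cone l (-σ) y,
      ∃ Z : Set (X × ℝ), IsPreconnected Z ∧ q ∈ Z ∧ (Z ∩ (Sp ∩ Cc)).Nonempty ∧
        Z ⊆ (C ∩ ball0 X lam0 ε₁ ∩ cone l (-σ) y) ∪ (Sp ∩ Cc) := by
    rintro q ⟨⟨hqC, hqball⟩, hqcone⟩
    have hqK₂ : q ∈ K₂ := ⟨⟨hqC, hballBc hqball⟩, hconeCc hqcone⟩
    have hqne : q ≠ pt := by
      intro h
      exact hcone_ne q hqcone (by rw [h])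
    set T := connectedComponentIn K₂ q with hT
    have hTpre : IsPreconnected T := isPreconnected_connectedComponentIn
    have hTq : q ∈ T := mem_connectedComponentIn hqK₂
    have hTsub : T ⊆ K₂ := connectedComponentIn_subset _ _
    have hptT : pt ∉ T := by
      intro hmem
      obtain ⟨r, hrT, hrb, hrne⟩ :=
        hTpre (ball0 X lam0 ε) {pt}ᶜ (isOpen_ball0 lam0 ε) isOpen_compl_singleton
          (by
            intro r hr
            by_cases h : r = pt
            · rw [h]; exact Or.inl hptball
            · exact Or.inr h)
          ⟨pt, hmem, hptball⟩ ⟨q, hTq, hqne⟩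
      exact hrne (hiso r (hTsub hrT) hrb)
    have hTcone : ∀ r ∈ T, r ∈ cone l (-σ) y := by
      intro r hr
      have hrne : r ≠ pt := fun h => hptT (h ▸ hr)
      exact hcone_open_mem r ((hCsub (hK₂C (hTsub hr))).1) hrne (hTsub hr).1.2 (hTsub hr).2
    have hTY : T ⊆ (C ∩ ball0 X lam0 ε₁ ∩ cone l (-σ) y) ∪ (Sp ∩ Cc) := by
      intro r hr
      have hrK₂ := hTsub hr
      rcases lt_or_eq_of_le (show ‖r.1‖ + |lam0 - r.2| ≤ ε₁ from hrK₂.1.2) with h | h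
      · exact Or.inl ⟨⟨hrK₂.1.1, h⟩, hTcone r hr⟩
      · exact Or.inr ⟨h, hrK₂.2⟩
    have hTfront : (T ∩ Sp).Nonempty := by
      by_contra hno
      rw [not_nonempty_iff_eq_empty] at hno
      obtain ⟨V, O, hTV, hVK₂, hVSp, hVclosed, hOopen, hVAO⟩ :=
        clopen_separation hK₂cpt hSpclosed hqK₂ hno
      set V' := V \ {pt} with hV'
      have hqV' : q ∈ V' := ⟨hTV hTq, hqne⟩
      have hV'sub : V' ⊆ ball0 X lam0 ε₁ ∩ cone l (-σ) y := by
        rintro r ⟨hrV, hrne⟩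
        have hrK₂ : r ∈ K₂ := hVK₂ hrV
        have hrcone : r ∈ cone l (-σ) y :=
          hcone_open_mem r ((hCsub (hK₂C hrK₂)).1) (by simpa using hrne) hrK₂.1.2 hrK₂.2
        have hrSp : r ∉ Sp := by
          intro h
          have : r ∈ V ∩ Sp := ⟨hrV, h⟩
          rw [hVSp] at this
          exact this
        have hrlt : ‖r.1‖ + |lam0 - r.2| < ε₁ := lt_of_le_of_ne hrK₂.1.2 hrSp
        exact ⟨hrlt, hrcone⟩
      set O₂ : Set (X × ℝ) := O ∩ {pt}ᶜ ∩ (ball0 X lam0 ε₁ ∩ cone l (-σ) y) with hO₂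
      have hO₂open : IsOpen O₂ :=
        (hOopen.inter isOpen_compl_singleton).inter
          ((isOpen_ball0 lam0 ε₁).inter (isOpen_cone l (-σ) y))
      have hV'O₂ : V' = C ∩ O₂ := by
        apply Subset.antisymm
        · rintro r ⟨hrV, hrne⟩
          have hrK₂ : r ∈ K₂ := hVK₂ hrV
          have hrO : r ∈ O := by
            have := hVAO ▸ hrV
            exact this.2
          exact ⟨hK₂C hrK₂, ⟨⟨hrO, hrne⟩, hV'sub ⟨hrV, hrne⟩⟩⟩
        · rintro r ⟨hrC, ⟨⟨hrO, hrne⟩, hrbc⟩⟩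
          have hrK₂ : r ∈ K₂ := ⟨⟨hrC, hballBc hrbc.1⟩, hconeCc hrbc.2⟩
          have hrV : r ∈ V := by rw [hVAO]; exact ⟨hrK₂, hrO⟩
          exact ⟨hrV, hrne⟩
      have hV'closed : IsClosed V' := by
        have heq : V' = V ∩ (ball0 X lam0 ε)ᶜ := by
          apply Subset.antisymm
          · rintro r ⟨hrV, hrne⟩
            refine ⟨hrV, fun hrb => ?_⟩
            exact (by simpa using hrne : r ≠ pt) (hiso r (hVK₂ hrV) hrb)
          · rintro r ⟨hrV, hrb⟩
            refine ⟨hrV, fun h => ?_⟩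
            rw [mem_singleton_iff] at h
            rw [h] at hrb
            exact hrb hptball
        rw [heq]
        exact hVclosed.inter (isOpen_ball0 lam0 ε).isClosed_compl
      obtain ⟨r, hrC, hrO₂, hrV'⟩ :=
        hCpre O₂ V'ᶜ hO₂open hV'closed.isOpen_compl
          (by
            intro r hr
            by_cases h : r ∈ V'
            · exact Or.inl ((hV'O₂ ▸ h).2)
            · exact Or.inr h)
          ⟨q, hK₂C hqK₂, (hV'O₂ ▸ hqV').2⟩
          ⟨pt, hptCl, fun h => h.2 rfl⟩
      exact hrV' (by rw [hV'O₂]; exact ⟨hrC, hrO₂⟩)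
    obtain ⟨b, hbT, hbSp⟩ := hTfront
    exact ⟨T, hTpre, hTq, ⟨b, hbT, hbSp, (hTsub hbT).2⟩, hTY⟩
  -- assemble
  obtain ⟨a₀, ha₀⟩ := hne
  have ha₀P₂ : a₀ ∈ Sp ∩ Cc := ⟨hfr ▸ ha₀.1.2, hclC ▸ ha₀.2⟩
  have hP₂pre : IsPreconnected (Sp ∩ Cc) :=
    isPreconnected_sphere_cone l hσ hv hlv hy0.le (le_of_lt hy1) lam0 hε₁0
  rw [hfr, hclC]
  constructor
  · exact ⟨a₀, Or.inr ha₀P₂⟩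
  · choose Z hZ1 hZ2 hZ3 hZ4 using key
    have hYeq : (C ∩ ball0 X lam0 ε₁ ∩ cone l (-σ) y) ∪ (Sp ∩ Cc) =
        ⋃₀ (insert (Sp ∩ Cc)
          {T | ∃ q, ∃ h : q ∈ C ∩ ball0 X lam0 ε₁ ∩ cone l (-σ) y, T = Z q h ∪ (Sp ∩ Cc)}) := by
      apply Subset.antisymm
      · rintro r (hr | hr)
        · exact ⟨Z r hr ∪ (Sp ∩ Cc), Or.inr ⟨r, hr, rfl⟩, Or.inl (hZ2 r hr)⟩
        · exact ⟨Sp ∩ Cc, Or.inl rfl, hr⟩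
      · rintro r ⟨T, hT, hrT⟩
        rcases hT with h | ⟨q, hq, rfl⟩
        · exact Or.inr (h ▸ hrT)
        · rcases hrT with h | h
          · exact hZ4 q hq h
          · exact Or.inr h
    rw [hYeq]
    apply isPreconnected_sUnion a₀
    · rintro T (h | ⟨q, hq, rfl⟩)
      · exact h ▸ ha₀P₂
      · exact Or.inr ha₀P₂
    · rintro T (h | ⟨q, hq, rfl⟩)
      · exact h ▸ hP₂pre
      · obtain ⟨b, hbZ, hbP₂⟩ := hZ3 q hq
        exact IsPreconnected.union b hbZ hbP₂ (hZ1 q hq) hP₂pre
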